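/- Let G' = (V, E') be a tree, and let q and p be tree-structured joint densities on (ℝ^d)^V over G' built from strictly positive consistent singleton densities q_i, p_i and pairwise densities q_{ij}, p_{ij}. Then KL(q || p) = Σ_{i∈V} KL(q_i || p_i) + Σ_{(i,j)∈E'} [KL(q_{ij} || p_{ij}) − KL(q_i || p_i) − KL(q_j || p_j)]. -/

import Mathlib

open MeasureTheory Finset
open scoped ENNReal
set_option linter.unusedSectionVars false
set_option linter.unusedVariables false
set_option linter.unusedSectionVars false

section Comb

variable {V : Type*} [Fintype V] [DecidableEq V]

/-- A finset of oriented edges that can be built by repeatedly attaching fresh leaves. -/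
inductive IsPForest : Finset (V × V) → Prop where
  | nil : IsPForest ∅
  | grow (F : Finset (V × V)) (e : V × V) (ℓ m : V) (hlm : ℓ ≠ m)
      (he : e = (ℓ, m) ∨ e = (m, ℓ))
      (hfresh : ∀ f ∈ F, f.1 ≠ ℓ ∧ f.2 ≠ ℓ) (heF : e ∉ F)
      (h : IsPForest F) : IsPForest (insert e F)

lemma exists_leaf {G : SimpleGraph V} (hG : G.IsAcyclic) {a0 b0 : V} (h0 : G.Adj a0 b0) :
    ∃ u w : V, G.Adj u w ∧ ∀ b, G.Adj u b → b = w := by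
  classical
  set L : Set ℕ := {n | ∃ (u v : V) (p : G.Walk u v), p.IsPath ∧ p.length = n} with hL
  have h1L : 1 ∈ L := by
    refine ⟨a0, b0, SimpleGraph.Walk.cons h0 SimpleGraph.Walk.nil, ?_, rfl⟩
    simp [h0.ne]
  have hne : L.Nonempty := ⟨1, h1L⟩
  have hbdd : BddAbove L := by
    refine ⟨Fintype.card V, ?_⟩
    rintro n ⟨u, v, p, hp, rfl⟩
    exact hp.length_lt.le
  obtain ⟨u, v, p, hp, hl⟩ := Nat.sSup_mem hne hbdd
  have h1 : 1 ≤ p.length := hl ▸ le_csSup hbdd h1L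
  cases p with
  | nil => simp at h1
  | @cons _ w _ h q =>
    refine ⟨u, w, h, fun b hb => ?_⟩
    by_contra hbw
    have hpq := hp
    rw [SimpleGraph.Walk.cons_isPath_iff] at hpq
    by_cases hbs : b ∈ (SimpleGraph.Walk.cons h q).support
    · -- build a cycle, contradiction with acyclicity
      have hbq : b ∈ q.support := by
        rw [SimpleGraph.Walk.support_cons] at hbs
        rcases List.mem_cons.1 hbs with h' | h'
        · exact absurd h' hb.ne'
        · exact h'
      set t := q.takeUntil b hbq with ht_def
      have ht : t.IsPath := hpq.1.takeUntil hbq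
      have hut : u ∉ t.support := fun hm => hpq.2 (q.support_takeUntil_subset hbq hm)
      have hct : (SimpleGraph.Walk.cons h t).IsPath := by
        rw [SimpleGraph.Walk.cons_isPath_iff]; exact ⟨ht, hut⟩
      have hedge : ¬ s(u, b) ∈ ((SimpleGraph.Walk.cons h t).reverse).edges := by
        rw [SimpleGraph.Walk.edges_reverse, List.mem_reverse]
        intro hmem
        rw [SimpleGraph.Walk.edges_cons] at hmem
        rcases List.mem_cons.1 hmem with h' | h'
        · rw [Sym2.congr_right] at h'
          exact hbw h'
        · exact hut (t.fst_mem_support_of_mem_edges h')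
      have hcyc : (SimpleGraph.Walk.cons hb ((SimpleGraph.Walk.cons h t).reverse)).IsCycle := by
        rw [SimpleGraph.Walk.cons_isCycle_iff]
        exact ⟨hct.reverse, hedge⟩
      exact hG _ hcyc
    · -- extend the path, contradiction with maximality
      have hext : (SimpleGraph.Walk.cons hb.symm (SimpleGraph.Walk.cons h q)).IsPath := by
        rw [SimpleGraph.Walk.cons_isPath_iff]; exact ⟨hp, hbs⟩
      have hmem : (SimpleGraph.Walk.cons hb.symm (SimpleGraph.Walk.cons h q)).length ∈ L :=
        ⟨b, v, _, hext, rfl⟩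
      have := le_csSup hbdd hmem
      rw [← hl] at this
      simp [SimpleGraph.Walk.length_cons] at this
  
lemma isAcyclic_mono {G1 G2 : SimpleGraph V} (hle : G1 ≤ G2) (h2 : G2.IsAcyclic) :
    G1.IsAcyclic := fun _ c hc => h2 (c.mapLe hle) (hc.mapLe hle)

lemma isPForest_of_acyclic :
    ∀ F : Finset (V × V), (∀ e ∈ F, e.1 ≠ e.2) → (∀ e ∈ F, (e.2, e.1) ∉ F) →
      (SimpleGraph.fromRel (fun a b => (a, b) ∈ F)).IsAcyclic → IsPForest F := by
  intro F
  induction F using Finset.strongInduction with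
  | _ F ih =>
    intro hirr honce hacyc
    rcases F.eq_empty_or_nonempty with rfl | ⟨e0, he0⟩
    · exact .nil
    · set G := SimpleGraph.fromRel (fun a b => (a, b) ∈ F) with hG
      have hadj : G.Adj e0.1 e0.2 := ⟨hirr _ he0, Or.inl he0⟩
      obtain ⟨u, w, huw, huniq⟩ := exists_leaf hacyc hadj
      obtain ⟨hune, hor⟩ := huw
      have heF : ((if (u, w) ∈ F then (u, w) else (w, u)) : V × V) ∈ F := by
        split <;> [assumption; tauto]
      set e : V × V := if (u, w) ∈ F then (u, w) else (w, u) with he_def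
      have he : e = (u, w) ∨ e = (w, u) := by
        rw [he_def]; split <;> simp
      have hfresh : ∀ f ∈ F.erase e, f.1 ≠ u ∧ f.2 ≠ u := by
        intro f hf
        have hfF := Finset.mem_of_mem_erase hf
        have hfne := Finset.ne_of_mem_erase hf
        constructor
        · intro h1
          have hadj2 : G.Adj u f.2 := ⟨h1 ▸ hirr f hfF, Or.inl (by rw [← h1]; exact hfF)⟩
          have hf2 := huniq _ hadj2
          have hfuw : f = (u, w) := by rw [← h1, ← hf2]
          rcases he with h' | h'
          · exact hfne (hfuw.trans h'.symm)
          · rw [hfuw] at hfF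
            rw [h'] at heF
            exact honce (u, w) hfF heF
        · intro h2
          have hadj2 : G.Adj u f.1 := (SimpleGraph.adj_symm G ⟨(h2 ▸ hirr f hfF).symm.symm, Or.inl (by rw [← h2]; exact hfF)⟩)
          have hf1 := huniq _ hadj2
          have hfwu : f = (w, u) := by rw [← h2, ← hf1]
          rcases he with h' | h'
          · rw [hfwu] at hfF
            rw [h'] at heF
            exact honce (u, w) heF hfF
          · exact hfne (hfwu.trans h'.symm)
      have hsub : IsPForest (F.erase e) := by
        refine ih _ (Finset.erase_ssubset heF) (fun f hf => hirr f (Finset.mem_of_mem_erase hf))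
          (fun f hf h' => honce f (Finset.mem_of_mem_erase hf) (Finset.mem_of_mem_erase h')) ?_
        refine isAcyclic_mono ?_ hacyc
        intro a b hab
        exact ⟨hab.1, hab.2.imp (Finset.mem_of_mem_erase) (Finset.mem_of_mem_erase)⟩
      have hgrow := IsPForest.grow (F.erase e) e u w hune he hfresh (Finset.notMem_erase e F) hsub
      rwa [Finset.insert_erase heF] at hgrow

end Comb

section Meas

variable {V : Type*} [Fintype V] [DecidableEq V] {d : ℕ}

/-- The unnormalized tree-structured density over vertex set `S` and edge set `F`. -/
noncomputable def treeW (q1 : V → (Fin d → ℝ) → ℝ)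
    (q2 : V → V → (Fin d → ℝ) → (Fin d → ℝ) → ℝ)
    (S : Finset V) (F : Finset (V × V)) (z : V → Fin d → ℝ) : ℝ :=
  (∏ i ∈ S, q1 i (z i)) *
    ∏ e ∈ F, q2 e.1 e.2 (z e.1) (z e.2) / (q1 e.1 (z e.1) * q1 e.2 (z e.2))

variable {q1 : V → (Fin d → ℝ) → ℝ} {q2 : V → V → (Fin d → ℝ) → (Fin d → ℝ) → ℝ}

lemma treeW_meas (hq1meas : ∀ i, Measurable (q1 i))
    (hq2meas : ∀ i j, Measurable (fun r : (Fin d → ℝ) × (Fin d → ℝ) => q2 i j r.1 r.2))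
    (S : Finset V) (F : Finset (V × V)) : Measurable (treeW q1 q2 S F) := by
  apply Measurable.mul
  · exact Finset.measurable_prod _ fun i _ => (hq1meas i).comp (measurable_pi_apply i)
  · refine Finset.measurable_prod _ fun e _ => ?_
    have hpair : Measurable (fun a : V → Fin d → ℝ => (a e.1, a e.2)) :=
      (measurable_pi_apply e.1).prodMk (measurable_pi_apply e.2)
    exact Measurable.div ((hq2meas e.1 e.2).comp hpair)
      (((hq1meas e.1).comp (measurable_pi_apply e.1)).mul
        ((hq1meas e.2).comp (measurable_pi_apply e.2)))

lemma treeW_pos (hq1pos : ∀ i x, 0 < q1 i x) (hq2pos : ∀ i j x y, 0 < q2 i j x y)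
    (S : Finset V) (F : Finset (V × V)) (z : V → Fin d → ℝ) : 0 < treeW q1 q2 S F z := by
  refine mul_pos (Finset.prod_pos fun i _ => hq1pos i (z i))
    (Finset.prod_pos fun e _ => div_pos (hq2pos _ _ _ _) (mul_pos (hq1pos _ _) (hq1pos _ _)))

private lemma key_alg (a b c A B : ℝ) (ha : a ≠ 0) :
    a * A * (c / (a * b) * B) = c / b * (A * B) := by
  field_simp

lemma treeW_update (hq1pos : ∀ i x, 0 < q1 i x)
    (hqsymm : ∀ i j x y, q2 i j x y = q2 j i y x)
    {S' : Finset V} {F' : Finset (V × V)} {ℓ m : V} {e : V × V}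
    (hlm : ℓ ≠ m) (he : e = (ℓ, m) ∨ e = (m, ℓ)) (hlS' : ℓ ∉ S')
    (hfresh : ∀ f ∈ F', f.1 ≠ ℓ ∧ f.2 ≠ ℓ) (heF' : e ∉ F')
    (z : V → Fin d → ℝ) (x : Fin d → ℝ) :
    treeW q1 q2 (insert ℓ S') (insert e F') (Function.update z ℓ x)
      = q2 ℓ m x (z m) / q1 m (z m) * treeW q1 q2 S' F' z := by
  have hupd : ∀ j : V, j ≠ ℓ → Function.update z ℓ x j = z j :=
    fun j hj => Function.update_of_ne hj _ _
  have h1 : (∏ j ∈ S', q1 j (Function.update z ℓ x j)) = ∏ j ∈ S', q1 j (z j) :=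
    Finset.prod_congr rfl fun j hj => by rw [hupd j (ne_of_mem_of_not_mem hj hlS')]
  have h2 : (∏ f ∈ F', q2 f.1 f.2 (Function.update z ℓ x f.1) (Function.update z ℓ x f.2) /
        (q1 f.1 (Function.update z ℓ x f.1) * q1 f.2 (Function.update z ℓ x f.2)))
      = ∏ f ∈ F', q2 f.1 f.2 (z f.1) (z f.2) / (q1 f.1 (z f.1) * q1 f.2 (z f.2)) :=
    Finset.prod_congr rfl fun f hf => by
      rw [hupd f.1 (hfresh f hf).1, hupd f.2 (hfresh f hf).2]
  rw [treeW, treeW, Finset.prod_insert hlS', Finset.prod_insert heF', h1, h2,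
    Function.update_self]
  rcases he with rfl | rfl
  · simp only [Function.update_self, hupd m hlm.symm]
    exact key_alg _ _ _ _ _ (hq1pos ℓ x).ne'
  · simp only [Function.update_self, hupd m hlm.symm]
    rw [hqsymm m ℓ (z m) x, mul_comm (q1 m (z m)) (q1 ℓ x)]
    exact key_alg _ _ _ _ _ (hq1pos ℓ x).ne'

end Meas
section Meas2

variable {V : Type*} [Fintype V] [DecidableEq V] {d : ℕ}
variable {q1 : V → (Fin d → ℝ) → ℝ} {q2 : V → V → (Fin d → ℝ) → (Fin d → ℝ) → ℝ}

lemma integrable_of_integral_ne_zero {α : Type*} [MeasurableSpace α] {μ : Measure α}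
    {f : α → ℝ} (h : ∫ x, f x ∂μ ≠ 0) : Integrable f μ := by
  by_contra hc
  rw [integral_undef hc] at h
  exact h rfl

lemma lint_q1 (hq1pos : ∀ i x, 0 < q1 i x) (hq1int : ∀ i, ∫ x, q1 i x = 1) (i : V) :
    ∫⁻ x, ENNReal.ofReal (q1 i x) = 1 := by
  have hint : Integrable (q1 i) := integrable_of_integral_ne_zero (by rw [hq1int i]; norm_num)
  rw [← ofReal_integral_eq_lintegral_ofReal hint (ae_of_all _ fun x => (hq1pos i x).le),
    hq1int i, ENNReal.ofReal_one]

lemma lint_q2_right (hq1pos : ∀ i x, 0 < q1 i x) (hq2pos : ∀ i j x y, 0 < q2 i j x y)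
    (hqcons : ∀ i j x, ∫ y, q2 i j x y = q1 i x) (i j : V) (x : Fin d → ℝ) :
    ∫⁻ y, ENNReal.ofReal (q2 i j x y) = ENNReal.ofReal (q1 i x) := by
  have hint : Integrable (fun y => q2 i j x y) :=
    integrable_of_integral_ne_zero (by rw [hqcons i j x]; exact (hq1pos i x).ne')
  rw [← ofReal_integral_eq_lintegral_ofReal hint (ae_of_all _ fun y => (hq2pos i j x y).le),
    hqcons]

lemma lint_q2_left (hq1pos : ∀ i x, 0 < q1 i x) (hq2pos : ∀ i j x y, 0 < q2 i j x y)
    (hqsymm : ∀ i j x y, q2 i j x y = q2 j i y x)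
    (hqcons : ∀ i j x, ∫ y, q2 i j x y = q1 i x) (i j : V) (y : Fin d → ℝ) :
    ∫⁻ x, ENNReal.ofReal (q2 i j x y) = ENNReal.ofReal (q1 j y) := by
  have : (fun x => ENNReal.ofReal (q2 i j x y)) = fun x => ENNReal.ofReal (q2 j i y x) :=
    funext fun x => by rw [hqsymm i j x y]
  rw [this, lint_q2_right hq1pos hq2pos hqcons j i y]

lemma meas_prod_q1 (hq1meas : ∀ i, Measurable (q1 i)) (S : Finset V) :
    Measurable fun z : V → Fin d → ℝ => ENNReal.ofReal (∏ j ∈ S, q1 j (z j)) :=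
  (Finset.measurable_prod _ fun i _ => (hq1meas i).comp (measurable_pi_apply i)).ennreal_ofReal

lemma lmarg_prod_const (hq1meas : ∀ i, Measurable (q1 i)) (hq1pos : ∀ i x, 0 < q1 i x)
    (hq1int : ∀ i, ∫ x, q1 i x = 1) (S : Finset V) (c : ℝ≥0∞) (z0 : V → Fin d → ℝ) :
    (∫⋯∫⁻_S, (fun z => ENNReal.ofReal (∏ j ∈ S, q1 j (z j)) * c)
        ∂(fun _ => (volume : Measure (Fin d → ℝ)))) z0 = c := by
  induction S using Finset.induction generalizing z0 with
  | empty => simp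
  | @insert j S hjS ihS =>
    rw [lmarginal_insert' (fun z => ENNReal.ofReal (∏ k ∈ insert j S, q1 k (z k)) * c) ((meas_prod_q1 hq1meas _).mul measurable_const) hjS]
    have hinner : (fun z => ∫⁻ x,
          (ENNReal.ofReal (∏ k ∈ insert j S, q1 k (Function.update z j x k)) * c))
        = fun z => ENNReal.ofReal (∏ k ∈ S, q1 k (z k)) * c := by
      funext z
      have hcong : ∀ x : Fin d → ℝ,
          ENNReal.ofReal (∏ k ∈ insert j S, q1 k (Function.update z j x k)) * c
            = ENNReal.ofReal (q1 j x) * (ENNReal.ofReal (∏ k ∈ S, q1 k (z k)) * c) := by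
        intro x
        rw [Finset.prod_insert hjS, Function.update_self,
          Finset.prod_congr rfl (fun k hk =>
            by rw [Function.update_of_ne (ne_of_mem_of_not_mem hk hjS) x z]),
          ENNReal.ofReal_mul (hq1pos j x).le, mul_assoc]
      simp_rw [hcong]
      rw [lintegral_mul_const'' _ ((hq1meas j).ennreal_ofReal.aemeasurable),
        lint_q1 hq1pos hq1int j, one_mul]
    rw [hinner]
    exact ihS z0

end Meas2

section Main

variable {V : Type*} [Fintype V] [DecidableEq V] {d : ℕ}
variable {q1 : V → (Fin d → ℝ) → ℝ} {q2 : V → V → (Fin d → ℝ) → (Fin d → ℝ) → ℝ}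

lemma marg_vertex_nil (hq1meas : ∀ i, Measurable (q1 i)) (hq1pos : ∀ i x, 0 < q1 i x)
    (hq1int : ∀ i, ∫ x, q1 i x = 1) (S : Finset V) {i : V} (hi : i ∈ S)
    (g : (Fin d → ℝ) → ℝ≥0∞) (hg : Measurable g) (z0 : V → Fin d → ℝ) :
    (∫⋯∫⁻_S, (fun z => ENNReal.ofReal (∏ j ∈ S, q1 j (z j)) * g (z i))
        ∂(fun _ => (volume : Measure (Fin d → ℝ)))) z0
      = ∫⁻ x, ENNReal.ofReal (q1 i x) * g x := by
  have hS : S = insert i (S.erase i) := (Finset.insert_erase hi).symm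
  have hfmeas : Measurable (fun z : V → Fin d → ℝ =>
      ENNReal.ofReal (∏ j ∈ insert i (S.erase i), q1 j (z j)) * g (z i)) := by
    exact (meas_prod_q1 hq1meas _).mul (hg.comp (measurable_pi_apply i))
  rw [hS, lmarginal_insert' _ hfmeas (Finset.notMem_erase i S)]
  have hinner : (fun z => ∫⁻ x, ENNReal.ofReal
        (∏ j ∈ insert i (S.erase i), q1 j (Function.update z i x j)) * g (Function.update z i x i))
      = fun z => ENNReal.ofReal (∏ j ∈ S.erase i, q1 j (z j))
          * ∫⁻ x, ENNReal.ofReal (q1 i x) * g x := by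
    funext z
    have hc : ∀ x : Fin d → ℝ,
        ENNReal.ofReal (∏ j ∈ insert i (S.erase i), q1 j (Function.update z i x j))
            * g (Function.update z i x i)
          = ENNReal.ofReal (∏ j ∈ S.erase i, q1 j (z j)) * (ENNReal.ofReal (q1 i x) * g x) := by
      intro x
      rw [Finset.prod_insert (Finset.notMem_erase i S), Function.update_self,
        Finset.prod_congr rfl (fun k hk => by
          rw [Function.update_of_ne (Finset.ne_of_mem_erase hk) x z]),
        ENNReal.ofReal_mul (hq1pos i x).le]
      ring
    simp_rw [hc]
    rw [lintegral_const_mul'' _ (f := fun x => ENNReal.ofReal (q1 i x) * g x) (((hq1meas i).ennreal_ofReal.mul hg).aemeasurable)]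
  rw [hinner]
  have := lmarg_prod_const hq1meas hq1pos hq1int (S.erase i)
    (∫⁻ x, ENNReal.ofReal (q1 i x) * g x) z0
  exact this

lemma marg_vertex (hq1meas : ∀ i, Measurable (q1 i))
    (hq2meas : ∀ i j, Measurable (fun r : (Fin d → ℝ) × (Fin d → ℝ) => q2 i j r.1 r.2))
    (hq1pos : ∀ i x, 0 < q1 i x) (hq2pos : ∀ i j x y, 0 < q2 i j x y)
    (hq1int : ∀ i, ∫ x, q1 i x = 1)
    (hqsymm : ∀ i j x y, q2 i j x y = q2 j i y x)
    (hqcons : ∀ i j x, ∫ y, q2 i j x y = q1 i x)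
    {F : Finset (V × V)} (hF : IsPForest F) :
    ∀ S : Finset V, (∀ f ∈ F, f.1 ∈ S ∧ f.2 ∈ S) →
      ∀ i ∈ S, ∀ g : (Fin d → ℝ) → ℝ≥0∞, Measurable g → ∀ z0 : V → Fin d → ℝ,
      (∫⋯∫⁻_S, (fun z => ENNReal.ofReal (treeW q1 q2 S F z) * g (z i))
          ∂(fun _ => (volume : Measure (Fin d → ℝ)))) z0
        = ∫⁻ x, ENNReal.ofReal (q1 i x) * g x := by
  induction hF with
  | nil =>
    intro S _ i hi g hg z0
    simp only [treeW, Finset.prod_empty, mul_one]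
    exact marg_vertex_nil hq1meas hq1pos hq1int S hi g hg z0
  | grow F e ℓ m hlm he hfresh heF hforest ih =>
    intro S hFS i hi g hg z0
    have heS : e.1 ∈ S ∧ e.2 ∈ S := hFS e (Finset.mem_insert_self e F)
    have hlS : ℓ ∈ S := by rcases he with rfl | rfl; exacts [heS.1, heS.2]
    have hmS : m ∈ S := by rcases he with rfl | rfl; exacts [heS.2, heS.1]
    set S' := S.erase ℓ with hS'def
    have hlS' : ℓ ∉ S' := Finset.notMem_erase ℓ S
    have hmS' : m ∈ S' := Finset.mem_erase.2 ⟨hlm.symm, hmS⟩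
    have hFS' : ∀ f ∈ F, f.1 ∈ S' ∧ f.2 ∈ S' := fun f hf =>
      ⟨Finset.mem_erase.2 ⟨(hfresh f hf).1, (hFS f (Finset.mem_insert_of_mem hf)).1⟩,
       Finset.mem_erase.2 ⟨(hfresh f hf).2, (hFS f (Finset.mem_insert_of_mem hf)).2⟩⟩
    have hS : S = insert ℓ S' := (Finset.insert_erase hlS).symm
    have hWmeas : Measurable (fun z : V → Fin d → ℝ =>
        ENNReal.ofReal (treeW q1 q2 (insert ℓ S') (insert e F) z) * g (z i)) :=
      ((treeW_meas hq1meas hq2meas _ _).ennreal_ofReal).mul (hg.comp (measurable_pi_apply i))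
    rw [hS, lmarginal_insert' _ hWmeas hlS']
    by_cases hil : i = ℓ
    · subst hil
      set G : (Fin d → ℝ) → ℝ≥0∞ :=
        fun y => ∫⁻ x, ENNReal.ofReal (q2 i m x y / q1 m y) * g x with hGdef
      have hGmeas : Measurable G := by
        have h0 : Measurable (fun r : (Fin d → ℝ) × (Fin d → ℝ) => q2 i m r.2 r.1) :=
          (hq2meas i m).comp measurable_swap
        have h1 : Measurable (fun r : (Fin d → ℝ) × (Fin d → ℝ) =>
            ENNReal.ofReal (q2 i m r.2 r.1 / q1 m r.1) * g r.2) :=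
          ((h0.div ((hq1meas m).comp measurable_fst)).ennreal_ofReal).mul
            (hg.comp measurable_snd)
        exact h1.lintegral_prod_right'
      have hinner : (fun z : V → Fin d → ℝ => ∫⁻ x,
            ENNReal.ofReal (treeW q1 q2 (insert i S') (insert e F) (Function.update z i x))
              * g (Function.update z i x i))
          = fun z => ENNReal.ofReal (treeW q1 q2 S' F z) * G (z m) := by
        funext z
        have hc : ∀ x : Fin d → ℝ,
            ENNReal.ofReal (treeW q1 q2 (insert i S') (insert e F) (Function.update z i x))
                * g (Function.update z i x i)
              = ENNReal.ofReal (treeW q1 q2 S' F z)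
                  * (ENNReal.ofReal (q2 i m x (z m) / q1 m (z m)) * g x) := by
          intro x
          rw [treeW_update hq1pos hqsymm hlm he hlS' hfresh heF z x, Function.update_self,
            ENNReal.ofReal_mul (div_nonneg (hq2pos i m x (z m)).le (hq1pos m (z m)).le)]
          ring
        simp_rw [hc]
        rw [lintegral_const_mul' _ _ ENNReal.ofReal_ne_top]
      rw [hinner, ih S' hFS' m hmS' G hGmeas z0]
      have h1 : ∀ y, ENNReal.ofReal (q1 m y) * G y
          = ∫⁻ x, ENNReal.ofReal (q2 i m x y) * g x := by
        intro y
        rw [hGdef]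
        rw [← lintegral_const_mul' _ _ ENNReal.ofReal_ne_top]
        refine lintegral_congr fun x => ?_
        rw [← mul_assoc, ← ENNReal.ofReal_mul (hq1pos m y).le, ← mul_div_assoc,
          mul_comm (q1 m y) (q2 i m x y), mul_div_cancel_right₀ _ (hq1pos m y).ne']
      simp_rw [h1]
      have hswapmeas : AEMeasurable (Function.uncurry fun y x =>
          ENNReal.ofReal (q2 i m x y) * g x)
          ((volume : Measure (Fin d → ℝ)).prod (volume : Measure (Fin d → ℝ))) := by
        have h0 : Measurable (fun r : (Fin d → ℝ) × (Fin d → ℝ) => q2 i m r.2 r.1) :=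
          (hq2meas i m).comp measurable_swap
        exact ((h0.ennreal_ofReal).mul (hg.comp measurable_snd)).aemeasurable
      rw [lintegral_lintegral_swap hswapmeas]
      refine lintegral_congr fun x => ?_
      have hsec : Measurable fun y : Fin d → ℝ => ENNReal.ofReal (q2 i m x y) := by
        exact ((hq2meas i m).comp (measurable_const.prodMk measurable_id)).ennreal_ofReal
      rw [lintegral_mul_const'' _ hsec.aemeasurable, lint_q2_right hq1pos hq2pos hqcons i m x]
    · have hiS' : i ∈ S' := Finset.mem_erase.2 ⟨hil, hi⟩
      have hinner : (fun z : V → Fin d → ℝ => ∫⁻ x,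
            ENNReal.ofReal (treeW q1 q2 (insert ℓ S') (insert e F) (Function.update z ℓ x))
              * g (Function.update z ℓ x i))
          = fun z => ENNReal.ofReal (treeW q1 q2 S' F z) * g (z i) := by
        funext z
        have hc : ∀ x : Fin d → ℝ,
            ENNReal.ofReal (treeW q1 q2 (insert ℓ S') (insert e F) (Function.update z ℓ x))
                * g (Function.update z ℓ x i)
              = ENNReal.ofReal (q2 ℓ m x (z m) / q1 m (z m))
                  * (ENNReal.ofReal (treeW q1 q2 S' F z) * g (z i)) := by
          intro x
          rw [treeW_update hq1pos hqsymm hlm he hlS' hfresh heF z x,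
            Function.update_of_ne hil _ _,
            ENNReal.ofReal_mul (div_nonneg (hq2pos ℓ m x (z m)).le (hq1pos m (z m)).le)]
          ring
        simp_rw [hc]
        have hsecmeas : Measurable fun x : Fin d → ℝ =>
            ENNReal.ofReal (q2 ℓ m x (z m) / q1 m (z m)) := by
          exact (((hq2meas ℓ m).comp (measurable_id.prodMk measurable_const)).div
            measurable_const).ennreal_ofReal
        rw [lintegral_mul_const'' _ hsecmeas.aemeasurable]
        have hsec2 : Measurable fun x : Fin d → ℝ => ENNReal.ofReal (q2 ℓ m x (z m)) := by
          exact ((hq2meas ℓ m).comp (measurable_id.prodMk measurable_const)).ennreal_ofReal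
        have hK : (∫⁻ x, ENNReal.ofReal (q2 ℓ m x (z m) / q1 m (z m))) = 1 := by
          simp_rw [ENNReal.ofReal_div_of_pos (hq1pos m (z m)), div_eq_mul_inv]
          rw [lintegral_mul_const'' _ hsec2.aemeasurable,
            lint_q2_left hq1pos hq2pos hqsymm hqcons ℓ m (z m),
            ENNReal.mul_inv_cancel (ENNReal.ofReal_pos.2 (hq1pos m (z m))).ne'
              ENNReal.ofReal_ne_top]
        rw [hK, one_mul]
      rw [hinner]
      exact ih S' hFS' i hiS' g hg z0

lemma marg_edge (hq1meas : ∀ i, Measurable (q1 i))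
    (hq2meas : ∀ i j, Measurable (fun r : (Fin d → ℝ) × (Fin d → ℝ) => q2 i j r.1 r.2))
    (hq1pos : ∀ i x, 0 < q1 i x) (hq2pos : ∀ i j x y, 0 < q2 i j x y)
    (hq1int : ∀ i, ∫ x, q1 i x = 1)
    (hqsymm : ∀ i j x y, q2 i j x y = q2 j i y x)
    (hqcons : ∀ i j x, ∫ y, q2 i j x y = q1 i x)
    {F : Finset (V × V)} (hF : IsPForest F) :
    ∀ S : Finset V, (∀ f ∈ F, f.1 ∈ S ∧ f.2 ∈ S) →
      ∀ a b : V, (a, b) ∈ F → ∀ g : (Fin d → ℝ) → (Fin d → ℝ) → ℝ≥0∞,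
      Measurable (fun r : (Fin d → ℝ) × (Fin d → ℝ) => g r.1 r.2) → ∀ z0 : V → Fin d → ℝ,
      (∫⋯∫⁻_S, (fun z => ENNReal.ofReal (treeW q1 q2 S F z) * g (z a) (z b))
          ∂(fun _ => (volume : Measure (Fin d → ℝ)))) z0
        = ∫⁻ x, ∫⁻ y, ENNReal.ofReal (q2 a b x y) * g x y := by
  induction hF with
  | nil =>
    intro S _ a b hab
    exact absurd hab (Finset.notMem_empty _)
  | grow F e ℓ m hlm he hfresh heF hforest ih =>
    intro S hFS a b hab g hgm z0
    have heS : e.1 ∈ S ∧ e.2 ∈ S := hFS e (Finset.mem_insert_self e F)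
    have hlS : ℓ ∈ S := by rcases he with rfl | rfl; exacts [heS.1, heS.2]
    have hmS : m ∈ S := by rcases he with rfl | rfl; exacts [heS.2, heS.1]
    set S' := S.erase ℓ with hS'def
    have hlS' : ℓ ∉ S' := Finset.notMem_erase ℓ S
    have hmS' : m ∈ S' := Finset.mem_erase.2 ⟨hlm.symm, hmS⟩
    have hFS' : ∀ f ∈ F, f.1 ∈ S' ∧ f.2 ∈ S' := fun f hf =>
      ⟨Finset.mem_erase.2 ⟨(hfresh f hf).1, (hFS f (Finset.mem_insert_of_mem hf)).1⟩,
       Finset.mem_erase.2 ⟨(hfresh f hf).2, (hFS f (Finset.mem_insert_of_mem hf)).2⟩⟩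
    have hS : S = insert ℓ S' := (Finset.insert_erase hlS).symm
    have hWmeas : Measurable (fun z : V → Fin d → ℝ =>
        ENNReal.ofReal (treeW q1 q2 (insert ℓ S') (insert e F) z) * g (z a) (z b)) := by
      have hpair : Measurable (fun z : V → Fin d → ℝ => (z a, z b)) :=
        (measurable_pi_apply a).prodMk (measurable_pi_apply b)
      exact ((treeW_meas hq1meas hq2meas _ _).ennreal_ofReal).mul (hgm.comp hpair)
    rw [hS, lmarginal_insert' _ hWmeas hlS']
    rcases Finset.mem_insert.1 hab with heq | habF
    · rcases he with rfl | rfl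
      · -- e = (ℓ, m), so a = ℓ, b = m
        injection heq with h1 h2
        subst h1; subst h2
        set G : (Fin d → ℝ) → ℝ≥0∞ :=
          fun y => ∫⁻ x, ENNReal.ofReal (q2 a b x y / q1 b y) * g x y with hGdef
        have hGmeas : Measurable G := by
          have h0 : Measurable (fun r : (Fin d → ℝ) × (Fin d → ℝ) => q2 a b r.2 r.1) :=
            (hq2meas a b).comp measurable_swap
          have h1m : Measurable (fun r : (Fin d → ℝ) × (Fin d → ℝ) =>
              ENNReal.ofReal (q2 a b r.2 r.1 / q1 b r.1) * g r.2 r.1) :=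
            ((h0.div ((hq1meas b).comp measurable_fst)).ennreal_ofReal).mul
              (hgm.comp measurable_swap)
          exact h1m.lintegral_prod_right'
        have hinner : (fun z : V → Fin d → ℝ => ∫⁻ x,
              ENNReal.ofReal (treeW q1 q2 (insert a S') (insert (a, b) F) (Function.update z a x))
                * g (Function.update z a x a) (Function.update z a x b))
            = fun z => ENNReal.ofReal (treeW q1 q2 S' F z) * G (z b) := by
          funext z
          have hc : ∀ x : Fin d → ℝ,
              ENNReal.ofReal (treeW q1 q2 (insert a S') (insert (a, b) F) (Function.update z a x))
                  * g (Function.update z a x a) (Function.update z a x b)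
                = ENNReal.ofReal (treeW q1 q2 S' F z)
                    * (ENNReal.ofReal (q2 a b x (z b) / q1 b (z b)) * g x (z b)) := by
            intro x
            rw [treeW_update hq1pos hqsymm hlm (Or.inl rfl) hlS' hfresh heF z x,
              Function.update_self, Function.update_of_ne hlm.symm _ _,
              ENNReal.ofReal_mul (div_nonneg (hq2pos a b x (z b)).le (hq1pos b (z b)).le)]
            ring
          simp_rw [hc]
          rw [lintegral_const_mul' _ _ ENNReal.ofReal_ne_top]
        rw [hinner, marg_vertex hq1meas hq2meas hq1pos hq2pos hq1int hqsymm hqcons hforest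
          S' hFS' b hmS' G hGmeas z0]
        have h1 : ∀ y, ENNReal.ofReal (q1 b y) * G y
            = ∫⁻ x, ENNReal.ofReal (q2 a b x y) * g x y := by
          intro y
          rw [hGdef]
          rw [← lintegral_const_mul' _ _ ENNReal.ofReal_ne_top]
          refine lintegral_congr fun x => ?_
          rw [← mul_assoc, ← ENNReal.ofReal_mul (hq1pos b y).le, ← mul_div_assoc,
            mul_comm (q1 b y) (q2 a b x y), mul_div_cancel_right₀ _ (hq1pos b y).ne']
        simp_rw [h1]
        have hswapmeas : AEMeasurable (Function.uncurry fun y x =>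
            ENNReal.ofReal (q2 a b x y) * g x y)
            ((volume : Measure (Fin d → ℝ)).prod (volume : Measure (Fin d → ℝ))) := by
          have h0 : Measurable (fun r : (Fin d → ℝ) × (Fin d → ℝ) => q2 a b r.2 r.1) :=
            (hq2meas a b).comp measurable_swap
          exact ((h0.ennreal_ofReal).mul (hgm.comp measurable_swap)).aemeasurable
        rw [lintegral_lintegral_swap hswapmeas]
      · -- e = (m, ℓ), so a = m, b = ℓ
        injection heq with h1 h2
        subst h1; subst h2
        set G : (Fin d → ℝ) → ℝ≥0∞ :=
          fun y => ∫⁻ x, ENNReal.ofReal (q2 b a x y / q1 a y) * g y x with hGdef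
        have hGmeas : Measurable G := by
          have h0 : Measurable (fun r : (Fin d → ℝ) × (Fin d → ℝ) => q2 b a r.2 r.1) :=
            (hq2meas b a).comp measurable_swap
          have h1m : Measurable (fun r : (Fin d → ℝ) × (Fin d → ℝ) =>
              ENNReal.ofReal (q2 b a r.2 r.1 / q1 a r.1) * g r.1 r.2) :=
            ((h0.div ((hq1meas a).comp measurable_fst)).ennreal_ofReal).mul hgm
          exact h1m.lintegral_prod_right'
        have hinner : (fun z : V → Fin d → ℝ => ∫⁻ x,
              ENNReal.ofReal (treeW q1 q2 (insert b S') (insert (a, b) F) (Function.update z b x))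
                * g (Function.update z b x a) (Function.update z b x b))
            = fun z => ENNReal.ofReal (treeW q1 q2 S' F z) * G (z a) := by
          funext z
          have hc : ∀ x : Fin d → ℝ,
              ENNReal.ofReal (treeW q1 q2 (insert b S') (insert (a, b) F) (Function.update z b x))
                  * g (Function.update z b x a) (Function.update z b x b)
                = ENNReal.ofReal (treeW q1 q2 S' F z)
                    * (ENNReal.ofReal (q2 b a x (z a) / q1 a (z a)) * g (z a) x) := by
            intro x
            rw [treeW_update hq1pos hqsymm hlm (Or.inr rfl) hlS' hfresh heF z x,
              Function.update_self, Function.update_of_ne hlm.symm _ _,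
              ENNReal.ofReal_mul (div_nonneg (hq2pos b a x (z a)).le (hq1pos a (z a)).le)]
            ring
          simp_rw [hc]
          rw [lintegral_const_mul' _ _ ENNReal.ofReal_ne_top]
        rw [hinner, marg_vertex hq1meas hq2meas hq1pos hq2pos hq1int hqsymm hqcons hforest
          S' hFS' a hmS' G hGmeas z0]
        have h1 : ∀ y, ENNReal.ofReal (q1 a y) * G y
            = ∫⁻ x, ENNReal.ofReal (q2 a b y x) * g y x := by
          intro y
          rw [hGdef]
          rw [← lintegral_const_mul' _ _ ENNReal.ofReal_ne_top]
          refine lintegral_congr fun x => ?_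
          rw [← mul_assoc, ← ENNReal.ofReal_mul (hq1pos a y).le, ← mul_div_assoc,
            mul_comm (q1 a y) (q2 b a x y), mul_div_cancel_right₀ _ (hq1pos a y).ne',
            hqsymm b a x y]
        simp_rw [h1]
    · -- (a, b) ∈ F
      have haℓ : a ≠ ℓ := (hfresh (a, b) habF).1
      have hbℓ : b ≠ ℓ := (hfresh (a, b) habF).2
      have hinner : (fun z : V → Fin d → ℝ => ∫⁻ x,
            ENNReal.ofReal (treeW q1 q2 (insert ℓ S') (insert e F) (Function.update z ℓ x))
              * g (Function.update z ℓ x a) (Function.update z ℓ x b))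
          = fun z => ENNReal.ofReal (treeW q1 q2 S' F z) * g (z a) (z b) := by
        funext z
        have hc : ∀ x : Fin d → ℝ,
            ENNReal.ofReal (treeW q1 q2 (insert ℓ S') (insert e F) (Function.update z ℓ x))
                * g (Function.update z ℓ x a) (Function.update z ℓ x b)
              = ENNReal.ofReal (q2 ℓ m x (z m) / q1 m (z m))
                  * (ENNReal.ofReal (treeW q1 q2 S' F z) * g (z a) (z b)) := by
          intro x
          rw [treeW_update hq1pos hqsymm hlm he hlS' hfresh heF z x,
            Function.update_of_ne haℓ _ _, Function.update_of_ne hbℓ _ _,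
            ENNReal.ofReal_mul (div_nonneg (hq2pos ℓ m x (z m)).le (hq1pos m (z m)).le)]
          ring
        simp_rw [hc]
        have hsecmeas : Measurable fun x : Fin d → ℝ =>
            ENNReal.ofReal (q2 ℓ m x (z m) / q1 m (z m)) := by
          exact (((hq2meas ℓ m).comp (measurable_id.prodMk measurable_const)).div
            measurable_const).ennreal_ofReal
        rw [lintegral_mul_const'' _ hsecmeas.aemeasurable]
        have hsec2 : Measurable fun x : Fin d → ℝ => ENNReal.ofReal (q2 ℓ m x (z m)) := by
          exact ((hq2meas ℓ m).comp (measurable_id.prodMk measurable_const)).ennreal_ofReal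
        have hK : (∫⁻ x, ENNReal.ofReal (q2 ℓ m x (z m) / q1 m (z m))) = 1 := by
          simp_rw [ENNReal.ofReal_div_of_pos (hq1pos m (z m)), div_eq_mul_inv]
          rw [lintegral_mul_const'' _ hsec2.aemeasurable,
            lint_q2_left hq1pos hq2pos hqsymm hqcons ℓ m (z m),
            ENNReal.mul_inv_cancel (ENNReal.ofReal_pos.2 (hq1pos m (z m))).ne'
              ENNReal.ofReal_ne_top]
        rw [hK, one_mul]
      rw [hinner]
      exact ih S' hFS' a b habF g hgm z0

lemma log_treeW (hq1pos : ∀ i x, 0 < q1 i x) (hq2pos : ∀ i j x y, 0 < q2 i j x y)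
    (S : Finset V) (F : Finset (V × V)) (z : V → Fin d → ℝ) :
    Real.log (treeW q1 q2 S F z)
      = (∑ i ∈ S, Real.log (q1 i (z i)))
        + ∑ e ∈ F, (Real.log (q2 e.1 e.2 (z e.1) (z e.2))
            - Real.log (q1 e.1 (z e.1)) - Real.log (q1 e.2 (z e.2))) := by
  rw [treeW, Real.log_mul (Finset.prod_pos fun i _ => hq1pos i (z i)).ne'
      (Finset.prod_pos fun e _ => div_pos (hq2pos _ _ _ _)
        (mul_pos (hq1pos _ _) (hq1pos _ _))).ne',
    Real.log_prod (fun i _ => (hq1pos i (z i)).ne'),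
    Real.log_prod (fun e _ => (div_pos (hq2pos _ _ _ _)
      (mul_pos (hq1pos _ _) (hq1pos _ _))).ne')]
  congr 1
  refine Finset.sum_congr rfl fun e _ => ?_
  rw [Real.log_div (hq2pos _ _ _ _).ne' (mul_pos (hq1pos _ _) (hq1pos _ _)).ne',
    Real.log_mul (hq1pos _ _).ne' (hq1pos _ _).ne']
  ring

lemma transfer_integral {α β : Type*} [MeasurableSpace α] [MeasurableSpace β]
    {μ : Measure α} {ν : Measure β} {π : α → β} (hπ : Measurable π)
    {w : α → ℝ} {w' : β → ℝ} (hw : Measurable w)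
    (hwpos : ∀ a, 0 ≤ w a) (hw'pos : ∀ b, 0 ≤ w' b)
    (hmarg : ∀ g : β → ℝ≥0∞, Measurable g →
      ∫⁻ a, ENNReal.ofReal (w a) * g (π a) ∂μ = ∫⁻ b, ENNReal.ofReal (w' b) * g b ∂ν)
    {f : β → ℝ} (hf : Measurable f) (hint : Integrable (fun b => w' b * f b) ν) :
    Integrable (fun a => w a * f (π a)) μ ∧
      ∫ a, w a * f (π a) ∂μ = ∫ b, w' b * f b ∂ν := by
  have key : ∀ h : β → ℝ, Measurable h →
      ∫⁻ a, ENNReal.ofReal (w a * h (π a)) ∂μ = ∫⁻ b, ENNReal.ofReal (w' b * h b) ∂ν := by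
    intro h hh
    calc ∫⁻ a, ENNReal.ofReal (w a * h (π a)) ∂μ
        = ∫⁻ a, ENNReal.ofReal (w a) * (fun x => ENNReal.ofReal (h x)) (π a) ∂μ :=
          lintegral_congr fun a => ENNReal.ofReal_mul (hwpos a)
      _ = ∫⁻ b, ENNReal.ofReal (w' b) * ENNReal.ofReal (h b) ∂ν := hmarg _ hh.ennreal_ofReal
      _ = ∫⁻ b, ENNReal.ofReal (w' b * h b) ∂ν :=
          lintegral_congr fun b => (ENNReal.ofReal_mul (hw'pos b)).symm
  have hsm : AEStronglyMeasurable (fun a => w a * f (π a)) μ :=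
    (hw.mul (hf.comp hπ)).aestronglyMeasurable
  have hfin : HasFiniteIntegral (fun a => w a * f (π a)) μ := by
    rw [hasFiniteIntegral_iff_norm]
    have habs : ∀ a, ‖w a * f (π a)‖ = w a * |f (π a)| := fun a => by
      rw [norm_mul, Real.norm_eq_abs, Real.norm_eq_abs, abs_of_nonneg (hwpos a)]
    calc ∫⁻ a, ENNReal.ofReal ‖w a * f (π a)‖ ∂μ
        = ∫⁻ a, ENNReal.ofReal (w a * (fun x => |f x|) (π a)) ∂μ :=
          lintegral_congr fun a => by rw [habs a]
      _ = ∫⁻ b, ENNReal.ofReal (w' b * |f b|) ∂ν := key _ hf.abs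
      _ = ∫⁻ b, ENNReal.ofReal ‖w' b * f b‖ ∂ν := lintegral_congr fun b => by
          rw [norm_mul, Real.norm_eq_abs, Real.norm_eq_abs, abs_of_nonneg (hw'pos b)]
      _ < ⊤ := by
          rw [← hasFiniteIntegral_iff_norm]
          exact hint.hasFiniteIntegral
  have hintA : Integrable (fun a => w a * f (π a)) μ := ⟨hsm, hfin⟩
  refine ⟨hintA, ?_⟩
  rw [integral_eq_lintegral_pos_part_sub_lintegral_neg_part hintA,
    integral_eq_lintegral_pos_part_sub_lintegral_neg_part hint]
  have hpos := key f hf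
  have hneg : ∫⁻ a, ENNReal.ofReal (-(w a * f (π a))) ∂μ
      = ∫⁻ b, ENNReal.ofReal (-(w' b * f b)) ∂ν := by
    simp_rw [neg_mul_eq_mul_neg]
    exact key (fun b => -f b) hf.neg
  rw [hpos, hneg]

end Main


/-- KL decomposition over trees (justifying Equation 7 of the paper): for
tree-structured joint densities `q` and `p` over the same finite tree,
`KL(q‖p) = ∑_i KL(qᵢ‖pᵢ) + ∑_{(i,j)∈E} [KL(q_{ij}‖p_{ij}) − KL(qᵢ‖pᵢ) − KL(qⱼ‖pⱼ)]`. -/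
theorem tree_kl_decomposition {V : Type*} [Fintype V] [DecidableEq V]
    (d : ℕ) (E : Finset (V × V))
    (T : SimpleGraph V)
    (hT : T.IsTree)
    (hTE : ∀ a b : V, T.Adj a b ↔ ((a, b) ∈ E ∨ (b, a) ∈ E))
    (hEirr : ∀ e ∈ E, e.1 ≠ e.2)
    (hEonce : ∀ e ∈ E, (e.2, e.1) ∉ E)
    (q1 p1 : V → (Fin d → ℝ) → ℝ)
    (q2 p2 : V → V → (Fin d → ℝ) → (Fin d → ℝ) → ℝ)
    (hq1meas : ∀ i, Measurable (q1 i)) (hp1meas : ∀ i, Measurable (p1 i))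
    (hq2meas : ∀ i j, Measurable (fun r : (Fin d → ℝ) × (Fin d → ℝ) => q2 i j r.1 r.2))
    (hp2meas : ∀ i j, Measurable (fun r : (Fin d → ℝ) × (Fin d → ℝ) => p2 i j r.1 r.2))
    (hq1pos : ∀ i x, 0 < q1 i x) (hp1pos : ∀ i x, 0 < p1 i x)
    (hq2pos : ∀ i j x y, 0 < q2 i j x y) (hp2pos : ∀ i j x y, 0 < p2 i j x y)
    (hq1int : ∀ i, ∫ x, q1 i x = 1) (hp1int : ∀ i, ∫ x, p1 i x = 1)
    (hqsymm : ∀ i j x y, q2 i j x y = q2 j i y x)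
    (hpsymm : ∀ i j x y, p2 i j x y = p2 j i y x)
    (hqcons : ∀ i j x, ∫ y, q2 i j x y = q1 i x)
    (hpcons : ∀ i j x, ∫ y, p2 i j x y = p1 i x)
    (q p : (V → (Fin d → ℝ)) → ℝ)
    (hq : ∀ z, q z = (∏ i, q1 i (z i)) *
      ∏ e ∈ E, q2 e.1 e.2 (z e.1) (z e.2) / (q1 e.1 (z e.1) * q1 e.2 (z e.2)))
    (hp : ∀ z, p z = (∏ i, p1 i (z i)) *
      ∏ e ∈ E, p2 e.1 e.2 (z e.1) (z e.2) / (p1 e.1 (z e.1) * p1 e.2 (z e.2)))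
    (hKLjoint : Integrable (fun z => q z * Real.log (q z / p z)))
    (hKL1 : ∀ i, Integrable (fun x => q1 i x * Real.log (q1 i x / p1 i x)))
    (hKL2 : ∀ i j, Integrable (fun r : (Fin d → ℝ) × (Fin d → ℝ) =>
      q2 i j r.1 r.2 * Real.log (q2 i j r.1 r.2 / p2 i j r.1 r.2))) :
    ∫ z : V → (Fin d → ℝ), q z * Real.log (q z / p z)
      = (∑ i, ∫ x, q1 i x * Real.log (q1 i x / p1 i x))
        + ∑ e ∈ E,
            ((∫ r : (Fin d → ℝ) × (Fin d → ℝ),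
              q2 e.1 e.2 r.1 r.2 * Real.log (q2 e.1 e.2 r.1 r.2 / p2 e.1 e.2 r.1 r.2))
            - (∫ x, q1 e.1 x * Real.log (q1 e.1 x / p1 e.1 x))
            - (∫ x, q1 e.2 x * Real.log (q1 e.2 x / p1 e.2 x))) := by
  classical
  -- E is a peelable forest
  have hGE : (SimpleGraph.fromRel (fun a b => (a, b) ∈ E)).IsAcyclic := by
    refine isAcyclic_mono ?_ hT.IsAcyclic
    intro a b hab
    exact (hTE a b).2 hab.2
  have hPF : IsPForest E := isPForest_of_acyclic E hEirr hEonce hGE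
  -- identification with treeW
  have hqW : ∀ z, q z = treeW q1 q2 Finset.univ E z := fun z => (hq z).trans rfl
  have hpW : ∀ z, p z = treeW p1 p2 Finset.univ E z := fun z => (hp z).trans rfl
  have hqmeas : Measurable q := by
    rw [funext hqW]; exact treeW_meas hq1meas hq2meas _ _
  have hqpos : ∀ z, 0 < q z := fun z => by
    rw [hqW z]; exact treeW_pos hq1pos hq2pos _ _ z
  have hppos : ∀ z, 0 < p z := fun z => by
    rw [hpW z]; exact treeW_pos hp1pos hp2pos _ _ z
  -- vertex marginals
  have hmargV : ∀ (i : V) (g : (Fin d → ℝ) → ℝ≥0∞), Measurable g →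
      ∫⁻ z : V → Fin d → ℝ, ENNReal.ofReal (q z) * g (z i)
        = ∫⁻ x, ENNReal.ofReal (q1 i x) * g x := by
    intro i g hg
    have h1 : ∫⁻ z : V → Fin d → ℝ, ENNReal.ofReal (q z) * g (z i)
        = ∫⁻ z : V → Fin d → ℝ, ENNReal.ofReal (treeW q1 q2 Finset.univ E z) * g (z i) :=
      lintegral_congr fun z => by rw [hqW z]
    rw [h1, volume_pi, lintegral_eq_lmarginal_univ (fun _ _ => (0:ℝ))]
    exact marg_vertex hq1meas hq2meas hq1pos hq2pos hq1int hqsymm hqcons hPF Finset.univ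
      (fun f _ => ⟨Finset.mem_univ _, Finset.mem_univ _⟩) i (Finset.mem_univ i) g hg _
  -- edge marginals
  have hmargE : ∀ a b : V, (a, b) ∈ E →
      ∀ g : (Fin d → ℝ) × (Fin d → ℝ) → ℝ≥0∞, Measurable g →
      ∫⁻ z : V → Fin d → ℝ, ENNReal.ofReal (q z) * g (z a, z b)
        = ∫⁻ r : (Fin d → ℝ) × (Fin d → ℝ), ENNReal.ofReal (q2 a b r.1 r.2) * g r := by
    intro a b hab g hg
    have hR : ∫⁻ r : (Fin d → ℝ) × (Fin d → ℝ), ENNReal.ofReal (q2 a b r.1 r.2) * g r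
        = ∫⁻ x, ∫⁻ y, ENNReal.ofReal (q2 a b x y) * g (x, y) := by
      rw [Measure.volume_eq_prod, lintegral_prod (fun r : (Fin d → ℝ) × (Fin d → ℝ) => ENNReal.ofReal (q2 a b r.1 r.2) * g r) ((hq2meas a b).ennreal_ofReal.mul hg).aemeasurable]
    have h1 : ∫⁻ z : V → Fin d → ℝ, ENNReal.ofReal (q z) * g (z a, z b)
        = ∫⁻ z : V → Fin d → ℝ, ENNReal.ofReal (treeW q1 q2 Finset.univ E z) * g (z a, z b) :=
      lintegral_congr fun z => by rw [hqW z]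
    rw [h1, hR, volume_pi, lintegral_eq_lmarginal_univ (fun _ _ => (0:ℝ))]
    exact marg_edge hq1meas hq2meas hq1pos hq2pos hq1int hqsymm hqcons hPF Finset.univ
      (fun f _ => ⟨Finset.mem_univ _, Finset.mem_univ _⟩) a b hab
      (fun x y => g (x, y)) (by exact hg) _
  -- transfers for vertices
  have TV : ∀ i : V,
      Integrable (fun z : V → Fin d → ℝ => q z * Real.log (q1 i (z i) / p1 i (z i))) ∧
      ∫ z : V → Fin d → ℝ, q z * Real.log (q1 i (z i) / p1 i (z i))
        = ∫ x, q1 i x * Real.log (q1 i x / p1 i x) := by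
    intro i
    have hf : Measurable fun x : Fin d → ℝ => Real.log (q1 i x / p1 i x) := by
      exact Real.measurable_log.comp ((hq1meas i).div (hp1meas i))
    exact transfer_integral (measurable_pi_apply i) hqmeas (fun z => (hqpos z).le)
      (fun x => (hq1pos i x).le) (hmargV i) hf (hKL1 i)
  -- transfers for edges
  have TEdge : ∀ a b : V, (a, b) ∈ E →
      Integrable (fun z : V → Fin d → ℝ =>
        q z * Real.log (q2 a b (z a) (z b) / p2 a b (z a) (z b))) ∧
      ∫ z : V → Fin d → ℝ, q z * Real.log (q2 a b (z a) (z b) / p2 a b (z a) (z b))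
        = ∫ r : (Fin d → ℝ) × (Fin d → ℝ),
            q2 a b r.1 r.2 * Real.log (q2 a b r.1 r.2 / p2 a b r.1 r.2) := by
    intro a b hab
    have hπ : Measurable fun z : V → Fin d → ℝ => (z a, z b) :=
      (measurable_pi_apply a).prodMk (measurable_pi_apply b)
    have hf : Measurable fun r : (Fin d → ℝ) × (Fin d → ℝ) =>
        Real.log (q2 a b r.1 r.2 / p2 a b r.1 r.2) := by
      exact Real.measurable_log.comp ((hq2meas a b).div (hp2meas a b))
    exact transfer_integral hπ hqmeas (fun z => (hqpos z).le)
      (fun r => (hq2pos a b r.1 r.2).le) (hmargE a b hab) hf (hKL2 a b)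
  -- pointwise decomposition of the log-ratio
  have hlog : ∀ z : V → Fin d → ℝ, Real.log (q z / p z)
      = (∑ i, Real.log (q1 i (z i) / p1 i (z i)))
        + ∑ e ∈ E, (Real.log (q2 e.1 e.2 (z e.1) (z e.2) / p2 e.1 e.2 (z e.1) (z e.2))
            - Real.log (q1 e.1 (z e.1) / p1 e.1 (z e.1))
            - Real.log (q1 e.2 (z e.2) / p1 e.2 (z e.2))) := by
    intro z
    rw [Real.log_div (hqpos z).ne' (hppos z).ne', hqW z, hpW z,
      log_treeW hq1pos hq2pos, log_treeW hp1pos hp2pos]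
    have e1 : ∑ i, Real.log (q1 i (z i) / p1 i (z i))
        = (∑ i, Real.log (q1 i (z i))) - ∑ i, Real.log (p1 i (z i)) := by
      rw [← Finset.sum_sub_distrib]
      exact Finset.sum_congr rfl fun i _ =>
        Real.log_div (hq1pos i (z i)).ne' (hp1pos i (z i)).ne'
    have e2 : ∑ e ∈ E, (Real.log (q2 e.1 e.2 (z e.1) (z e.2) / p2 e.1 e.2 (z e.1) (z e.2))
            - Real.log (q1 e.1 (z e.1) / p1 e.1 (z e.1))
            - Real.log (q1 e.2 (z e.2) / p1 e.2 (z e.2)))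
        = (∑ e ∈ E, (Real.log (q2 e.1 e.2 (z e.1) (z e.2))
            - Real.log (q1 e.1 (z e.1)) - Real.log (q1 e.2 (z e.2))))
          - ∑ e ∈ E, (Real.log (p2 e.1 e.2 (z e.1) (z e.2))
            - Real.log (p1 e.1 (z e.1)) - Real.log (p1 e.2 (z e.2))) := by
      rw [← Finset.sum_sub_distrib]
      refine Finset.sum_congr rfl fun e _ => ?_
      rw [Real.log_div (hq2pos _ _ _ _).ne' (hp2pos _ _ _ _).ne',
        Real.log_div (hq1pos _ _).ne' (hp1pos _ _).ne',
        Real.log_div (hq1pos _ _).ne' (hp1pos _ _).ne']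
      ring
    rw [e1, e2]
    ring
  -- integrability of the pieces
  have hintE : ∀ e ∈ E, Integrable (fun z : V → Fin d → ℝ =>
      q z * Real.log (q2 e.1 e.2 (z e.1) (z e.2) / p2 e.1 e.2 (z e.1) (z e.2))
        - q z * Real.log (q1 e.1 (z e.1) / p1 e.1 (z e.1))
        - q z * Real.log (q1 e.2 (z e.2) / p1 e.2 (z e.2))) := by
    intro e he
    exact ((TEdge e.1 e.2 he).1.sub (TV e.1).1).sub (TV e.2).1
  have hint1 : Integrable (fun z : V → Fin d → ℝ =>
      ∑ i, q z * Real.log (q1 i (z i) / p1 i (z i))) :=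
    integrable_finset_sum _ fun i _ => (TV i).1
  have hint2 : Integrable (fun z : V → Fin d → ℝ =>
      ∑ e ∈ E, (q z * Real.log (q2 e.1 e.2 (z e.1) (z e.2) / p2 e.1 e.2 (z e.1) (z e.2))
        - q z * Real.log (q1 e.1 (z e.1) / p1 e.1 (z e.1))
        - q z * Real.log (q1 e.2 (z e.2) / p1 e.2 (z e.2)))) :=
    integrable_finset_sum _ hintE
  calc ∫ z : V → (Fin d → ℝ), q z * Real.log (q z / p z)
      = ∫ z : V → (Fin d → ℝ),
          ((∑ i, q z * Real.log (q1 i (z i) / p1 i (z i)))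
            + ∑ e ∈ E, (q z * Real.log (q2 e.1 e.2 (z e.1) (z e.2) / p2 e.1 e.2 (z e.1) (z e.2))
              - q z * Real.log (q1 e.1 (z e.1) / p1 e.1 (z e.1))
              - q z * Real.log (q1 e.2 (z e.2) / p1 e.2 (z e.2)))) := by
        refine integral_congr_ae (Filter.Eventually.of_forall fun z => ?_)
        simp only [hlog, mul_add, Finset.mul_sum, mul_sub]
    _ = (∫ z : V → (Fin d → ℝ), ∑ i, q z * Real.log (q1 i (z i) / p1 i (z i)))
          + ∫ z : V → (Fin d → ℝ),
            ∑ e ∈ E, (q z * Real.log (q2 e.1 e.2 (z e.1) (z e.2) / p2 e.1 e.2 (z e.1) (z e.2))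
              - q z * Real.log (q1 e.1 (z e.1) / p1 e.1 (z e.1))
              - q z * Real.log (q1 e.2 (z e.2) / p1 e.2 (z e.2))) :=
        integral_add hint1 hint2
    _ = (∑ i, ∫ z : V → (Fin d → ℝ), q z * Real.log (q1 i (z i) / p1 i (z i)))
          + ∑ e ∈ E, ∫ z : V → (Fin d → ℝ),
            (q z * Real.log (q2 e.1 e.2 (z e.1) (z e.2) / p2 e.1 e.2 (z e.1) (z e.2))
              - q z * Real.log (q1 e.1 (z e.1) / p1 e.1 (z e.1))
              - q z * Real.log (q1 e.2 (z e.2) / p1 e.2 (z e.2))) := by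
        rw [integral_finset_sum _ (fun i _ => (TV i).1), integral_finset_sum _ hintE]
    _ = (∑ i, ∫ x, q1 i x * Real.log (q1 i x / p1 i x))
        + ∑ e ∈ E,
            ((∫ r : (Fin d → ℝ) × (Fin d → ℝ),
              q2 e.1 e.2 r.1 r.2 * Real.log (q2 e.1 e.2 r.1 r.2 / p2 e.1 e.2 r.1 r.2))
            - (∫ x, q1 e.1 x * Real.log (q1 e.1 x / p1 e.1 x))
            - (∫ x, q1 e.2 x * Real.log (q1 e.2 x / p1 e.2 x))) := by
        congr 1
        · exact Finset.sum_congr rfl fun i _ => (TV i).2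
        · refine Finset.sum_congr rfl fun e he => ?_
          have hA := (TEdge e.1 e.2 he).1
          have hB := (TV e.1).1
          have hC := (TV e.2).1
          have hAB : Integrable (fun z : V → Fin d → ℝ =>
              q z * Real.log (q2 e.1 e.2 (z e.1) (z e.2) / p2 e.1 e.2 (z e.1) (z e.2))
                - q z * Real.log (q1 e.1 (z e.1) / p1 e.1 (z e.1))) := hA.sub hB
          rw [integral_sub hAB hC, integral_sub hA hB,
            (TEdge e.1 e.2 he).2, (TV e.1).2, (TV e.2).2]
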